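/- Let η̃_{k+1} = (I_p - (1/m_k) F_{k-1} φ_k φ_kᵀ) η̃_k where m_k = β + φ_kᵀ F_{k-1} φ_k, and suppose F_k⁻¹ = β F_{k-1}⁻¹ + φ_k φ_kᵀ. Then F_k⁻¹ η̃_{k+1} = β F_{k-1}⁻¹ η̃_k for all k, and consequently F_{k-1}⁻¹ η̃_k = β^k F_{-1}⁻¹ η̃_0 for all k ≥ 0. -/
import Mathlib


open Matrix

/-- fundamental property of the DT LS estimator:
`F_k⁻¹ η̃_{k+1} = β F_{k-1}⁻¹ η̃_k`, hence `F_{k-1}⁻¹ η̃_k = βᵏ F_{-1}⁻¹ η̃_0`.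
Here `F k` stands for `F_{k-1}`, so `F 0 = F_{-1}`. -/
theorem stmt11 {p : ℕ} (φ : ℕ → Fin p → ℝ) (β : ℝ) (hβ : 0 < β)
    (F : ℕ → Matrix (Fin p) (Fin p) ℝ) (η : ℕ → Fin p → ℝ)
    (hFu : ∀ k, IsUnit (F k))
    (hm : ∀ k, 0 < β + φ k ⬝ᵥ (F k).mulVec (φ k))
    (hFinv : ∀ k : ℕ, (F (k + 1))⁻¹ = β • (F k)⁻¹ + vecMulVec (φ k) (φ k))
    (hη : ∀ k : ℕ, η (k + 1) = η k -
      (β + φ k ⬝ᵥ (F k).mulVec (φ k))⁻¹ •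
        (F k).mulVec ((vecMulVec (φ k) (φ k)).mulVec (η k))) :
    (∀ k : ℕ, (F (k + 1))⁻¹.mulVec (η (k + 1)) = β • (F k)⁻¹.mulVec (η k)) ∧
    (∀ k : ℕ, (F k)⁻¹.mulVec (η k) = β ^ k • (F 0)⁻¹.mulVec (η 0)) := by
  have hvv : ∀ (k : ℕ) (u : Fin p → ℝ),
      (vecMulVec (φ k) (φ k)).mulVec u = (φ k ⬝ᵥ u) • φ k := by
    intro k u
    ext i
    simp [vecMulVec, mulVec, dotProduct, Finset.mul_sum, mul_comm, mul_left_comm]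
  have key : ∀ k : ℕ, (F (k + 1))⁻¹.mulVec (η (k + 1)) = β • (F k)⁻¹.mulVec (η k) := by
    intro k
    have hdet := (Matrix.isUnit_iff_isUnit_det _).mp (hFu k)
    have hinv : (F k)⁻¹ * F k = 1 := Matrix.nonsing_inv_mul _ hdet
    set m := β + φ k ⬝ᵥ (F k).mulVec (φ k) with hmdef
    have hm0 : m ≠ 0 := ne_of_gt (hm k)
    have hFF : ∀ v : Fin p → ℝ, (F k)⁻¹.mulVec ((F k).mulVec v) = v := by
      intro v
      rw [Matrix.mulVec_mulVec, hinv, Matrix.one_mulVec]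
    rw [hη k, hFinv k]
    rw [Matrix.mulVec_sub, Matrix.mulVec_smul]
    rw [Matrix.add_mulVec, Matrix.add_mulVec, Matrix.smul_mulVec,
      Matrix.smul_mulVec, hvv, hvv]
    set a := φ k ⬝ᵥ η k with ha
    have h2 : φ k ⬝ᵥ (a • (F k).mulVec (φ k)) = a * (m - β) := by
      simp only [dotProduct_smul, smul_eq_mul, hmdef]; ring
    simp only [Matrix.mulVec_smul]
    rw [hFF, h2]
    have : β • (F k)⁻¹.mulVec (η k) + a • φ k -
        m⁻¹ • (β • (a • φ k) + (a * (m - β)) • φ k) = β • (F k)⁻¹.mulVec (η k) := by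
      have : β • (a • φ k) + (a * (m - β)) • φ k = (m * a) • φ k := by
        rw [smul_smul, ← add_smul]; ring_nf
      rw [this, smul_smul, inv_mul_eq_div, mul_comm m a, mul_div_assoc,
        div_self hm0, mul_one]
      abel
    exact this
  refine ⟨key, ?_⟩
  intro k
  induction k with
  | zero => simp
  | succ n ih => rw [key n, ih, smul_smul, ← pow_succ']
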